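/- $\prod_{p \mid n} \frac{1}{1 - 1/p - 1/p^2} = O(\log n)$ as $n \to \infty$, where the product runs over prime divisors of $n$. -/

import Mathlib

open Filter Finset

private lemma sum_inv_sq_le (n : ℕ) (hn : 1 ≤ n) :
    ∑ k ∈ Finset.Icc 2 n, (1:ℝ)/(k:ℝ)^2 ≤ 1 - 1/(n:ℝ) := by
  induction n, hn using Nat.le_induction with
  | base => simp
  | succ n hn ih =>
    rw [Finset.sum_Icc_succ_top (by omega)]
    have h1 : (1:ℝ) ≤ (n:ℝ) := by exact_mod_cast hn
    push_cast
    have key : (1:ℝ)/((n:ℝ)+1)^2 ≤ 1/(n:ℝ) - 1/((n:ℝ)+1) := by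
      rw [div_sub_div _ _ (by linarith) (by linarith)]
      rw [div_le_div_iff₀ (by positivity) (by positivity)]
      ring_nf
      nlinarith
    linarith

private lemma prod_ratio : ∀ (S : Finset ℕ), (∀ k ∈ S, 2 ≤ k) →
    ∏ k ∈ S, ((k:ℝ)/((k:ℝ)-1)) ≤ S.card + 1 := by
  intro S
  induction S using Finset.induction_on_max with
  | empty => intro _; simp
  | insert a s ha ih =>
    intro hS
    have ha2 : 2 ≤ a := hS a (mem_insert_self a s)
    have hs2 : ∀ k ∈ s, 2 ≤ k := fun k hk => hS k (mem_insert_of_mem hk)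
    have hnotmem : a ∉ s := fun h => lt_irrefl a (ha a h)
    rw [Finset.prod_insert hnotmem, Finset.card_insert_of_notMem hnotmem]
    have hcard : s.card + 2 ≤ a := by
      have hsub : s ⊆ Finset.Icc 2 (a-1) := fun x hx =>
        Finset.mem_Icc.mpr ⟨hs2 x hx, by have := ha x hx; omega⟩
      have := Finset.card_le_card hsub
      rw [Nat.card_Icc] at this
      omega
    have ihs := ih hs2
    have ha1 : (1:ℝ) < (a:ℝ) := by exact_mod_cast lt_of_lt_of_le one_lt_two ha2
    have hpos : (0:ℝ) < (a:ℝ) - 1 := by linarith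
    have hprodpos : 0 ≤ ∏ k ∈ s, ((k:ℝ)/((k:ℝ)-1)) := by
      apply Finset.prod_nonneg
      intro k hk
      have : (2:ℝ) ≤ (k:ℝ) := by exact_mod_cast hs2 k hk
      apply div_nonneg <;> linarith
    have hcardR : ((s.card:ℝ) + 2) ≤ (a:ℝ) := by exact_mod_cast hcard
    have step1 : (a:ℝ)/((a:ℝ)-1) * ∏ k ∈ s, ((k:ℝ)/((k:ℝ)-1))
        ≤ (a:ℝ)/((a:ℝ)-1) * ((s.card:ℝ) + 1) :=
      mul_le_mul_of_nonneg_left ihs (div_nonneg (by linarith) (by linarith))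
    have step2 : (a:ℝ)/((a:ℝ)-1) * ((s.card:ℝ) + 1) ≤ (s.card:ℝ) + 2 := by
      rw [div_mul_eq_mul_div, div_le_iff₀ hpos]
      nlinarith
    push_cast
    linarith

theorem stmt12 :
    (fun n : ℕ => ∏ p ∈ n.primeFactors, (1 - 1 / (p : ℝ) - 1 / (p : ℝ) ^ 2)⁻¹)
      =O[atTop] fun n : ℕ => Real.log n := by
  rw [Asymptotics.isBigO_iff]
  refine ⟨Real.exp 4 * (2 / Real.log 2), ?_⟩
  filter_upwards [eventually_ge_atTop 2] with n hn
  have hlog2 : (0:ℝ) < Real.log 2 := Real.log_pos one_lt_two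
  have hnR : (2:ℝ) ≤ (n:ℝ) := by exact_mod_cast hn
  have hlogn : Real.log 2 ≤ Real.log n := Real.log_le_log two_pos hnR
  -- basic facts about prime factors
  have hp2 : ∀ p ∈ n.primeFactors, 2 ≤ p := fun p hp =>
    (Nat.prime_of_mem_primeFactors hp).two_le
  have hfac_pos : ∀ p ∈ n.primeFactors, (0:ℝ) < 1 - 1/(p:ℝ) - 1/(p:ℝ)^2 := by
    intro p hp
    have h2 : (2:ℝ) ≤ (p:ℝ) := by exact_mod_cast hp2 p hp
    have h1 : 1/(p:ℝ) ≤ 1/2 := by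
      rw [div_le_div_iff₀ (by linarith) (by norm_num)]; linarith
    have h2' : 1/(p:ℝ)^2 ≤ 1/4 := by
      rw [div_le_div_iff₀ (by positivity) (by norm_num)]; nlinarith
    linarith
  -- pointwise bound
  have hpoint : ∀ p ∈ n.primeFactors,
      (1 - 1/(p:ℝ) - 1/(p:ℝ)^2)⁻¹ ≤ (1 + 4/(p:ℝ)^2) * ((p:ℝ)/((p:ℝ)-1)) := by
    intro p hp
    have h2 : (2:ℝ) ≤ (p:ℝ) := by exact_mod_cast hp2 p hp
    have hpos := hfac_pos p hp
    rw [inv_le_iff_one_le_mul₀ hpos]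
    have hp0 : (0:ℝ) < (p:ℝ) := by linarith
    have hp1 : (0:ℝ) < (p:ℝ) - 1 := by linarith
    have expand : (1 + 4/(p:ℝ)^2) * ((p:ℝ)/((p:ℝ)-1)) * (1 - 1/(p:ℝ) - 1/(p:ℝ)^2) - 1
        = ((3*(p:ℝ)^2 - 4*(p:ℝ) - 4)) / ((p:ℝ)^3 * ((p:ℝ)-1)) := by
      field_simp
      ring
    rw [← sub_nonneg, expand]
    exact div_nonneg (by nlinarith) (by positivity)
  -- product splits
  have hsplit : ∏ p ∈ n.primeFactors, (1 - 1/(p:ℝ) - 1/(p:ℝ)^2)⁻¹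
      ≤ (∏ p ∈ n.primeFactors, (1 + 4/(p:ℝ)^2)) *
        (∏ p ∈ n.primeFactors, ((p:ℝ)/((p:ℝ)-1))) := by
    rw [← Finset.prod_mul_distrib]
    exact Finset.prod_le_prod (fun p hp => le_of_lt (inv_pos.mpr (hfac_pos p hp))) hpoint
  -- first product ≤ exp 4
  have hprod1 : ∏ p ∈ n.primeFactors, (1 + 4/(p:ℝ)^2) ≤ Real.exp 4 := by
    calc ∏ p ∈ n.primeFactors, (1 + 4/(p:ℝ)^2)
        ≤ ∏ p ∈ n.primeFactors, Real.exp (4/(p:ℝ)^2) := by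
          apply Finset.prod_le_prod
          · intro p hp; positivity
          · intro p hp; linarith [Real.add_one_le_exp (4/(p:ℝ)^2)]
      _ = Real.exp (∑ p ∈ n.primeFactors, 4/(p:ℝ)^2) := (Real.exp_sum _ _).symm
      _ ≤ Real.exp 4 := by
          apply Real.exp_le_exp.mpr
          have hsub : n.primeFactors ⊆ Finset.Icc 2 n := by
            intro p hp
            exact Finset.mem_Icc.mpr ⟨hp2 p hp, Nat.le_of_mem_primeFactors hp⟩
          have h1 : ∑ p ∈ n.primeFactors, 4/(p:ℝ)^2 ≤ ∑ p ∈ Finset.Icc 2 n, 4/(p:ℝ)^2 := by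
            apply Finset.sum_le_sum_of_subset_of_nonneg hsub
            intro p _ _; positivity
          have h2 : ∑ p ∈ Finset.Icc 2 n, 4/(p:ℝ)^2 = 4 * ∑ p ∈ Finset.Icc 2 n, 1/(p:ℝ)^2 := by
            rw [Finset.mul_sum]; apply Finset.sum_congr rfl; intro p _; ring
          have h3 := sum_inv_sq_le n (by omega)
          have hn0 : (0:ℝ) < (n:ℝ) := by linarith
          have : 1/(n:ℝ) ≥ 0 := by positivity
          linarith
  -- second product ≤ card + 1
  have hprod2 : ∏ p ∈ n.primeFactors, ((p:ℝ)/((p:ℝ)-1)) ≤ n.primeFactors.card + 1 :=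
    prod_ratio _ hp2
  -- card bound: 2 ^ card ≤ n
  have hcard : (n.primeFactors.card : ℝ) ≤ Real.log n / Real.log 2 := by
    have hpow : 2 ^ n.primeFactors.card ≤ n := by
      calc 2 ^ n.primeFactors.card ≤ ∏ p ∈ n.primeFactors, p :=
            Finset.pow_card_le_prod _ _ _ hp2
        _ ≤ n := Nat.le_of_dvd (by omega) (Nat.prod_primeFactors_dvd n)
    have hpowR : (2:ℝ) ^ n.primeFactors.card ≤ (n:ℝ) := by exact_mod_cast hpow
    have := Real.log_le_log (by positivity) hpowR
    rw [Real.log_pow] at this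
    rw [le_div_iff₀ hlog2]
    exact this
  -- combine
  have hlogn_pos : (0:ℝ) < Real.log n := lt_of_lt_of_le hlog2 hlogn
  have hcard1 : (n.primeFactors.card : ℝ) + 1 ≤ 2 * Real.log n / Real.log 2 := by
    have h1 : (1:ℝ) ≤ Real.log n / Real.log 2 := (one_le_div hlog2).mpr hlogn
    calc (n.primeFactors.card : ℝ) + 1 ≤ Real.log n / Real.log 2 + Real.log n / Real.log 2 :=
          add_le_add hcard h1
      _ = 2 * Real.log n / Real.log 2 := by ring
  have hprod2_nonneg : (0:ℝ) ≤ ∏ p ∈ n.primeFactors, ((p:ℝ)/((p:ℝ)-1)) := by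
    apply Finset.prod_nonneg
    intro p hp
    have : (2:ℝ) ≤ (p:ℝ) := by exact_mod_cast hp2 p hp
    apply div_nonneg <;> linarith
  have hLHS_nonneg : (0:ℝ) ≤ ∏ p ∈ n.primeFactors, (1 - 1/(p:ℝ) - 1/(p:ℝ)^2)⁻¹ :=
    Finset.prod_nonneg fun p hp => le_of_lt (inv_pos.mpr (hfac_pos p hp))
  rw [Real.norm_eq_abs, Real.norm_eq_abs, abs_of_nonneg hLHS_nonneg,
    abs_of_nonneg (le_of_lt hlogn_pos)]
  calc ∏ p ∈ n.primeFactors, (1 - 1/(p:ℝ) - 1/(p:ℝ)^2)⁻¹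
      ≤ (∏ p ∈ n.primeFactors, (1 + 4/(p:ℝ)^2)) *
        (∏ p ∈ n.primeFactors, ((p:ℝ)/((p:ℝ)-1))) := hsplit
    _ ≤ Real.exp 4 * ((n.primeFactors.card : ℝ) + 1) := by
        apply mul_le_mul hprod1 hprod2 hprod2_nonneg (le_of_lt (Real.exp_pos 4))
    _ ≤ Real.exp 4 * (2 * Real.log n / Real.log 2) :=
        mul_le_mul_of_nonneg_left hcard1 (le_of_lt (Real.exp_pos 4))
    _ = Real.exp 4 * (2 / Real.log 2) * Real.log n := by ring
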